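/- Max-min as an LP: the problem max_{Q∈C} min_{x∈X} x^T(r(Q) + M(Q)^T Û) has the same optimal value as the linear program: maximize -d^T y + z over variables Q, y, z, r, M, S, s, K subject to M = Σ_k G_k ⊙ (1(Qe_k)^T), r = (R ⊙ Q)1, -y + z·1 ≤ r + M^T Û, K = M + S + s·1^T, s + d ≥ K d, Q1 = 1, Q ≥ 0, y ≥ 0, S ≥ 0, K ≥ 0. -/

import Mathlib

open Matrix Finset

/-- Row-stochastic policy matrix. -/
def rowStoch {n p : ℕ} (Q : Fin n → Fin p → ℝ) : Prop :=
  (∀ s a, 0 ≤ Q s a) ∧ ∀ s, ∑ a, Q s a = 1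

/-- Column-stochastic matrix. -/
def colStoch {n : ℕ} (M : Matrix (Fin n) (Fin n) ℝ) : Prop :=
  (∀ i j, 0 ≤ M i j) ∧ ∀ j, ∑ i, M i j = 1

/-- Capped probability simplex `X = {x : 0 ≤ x ≤ d, 1ᵀx = 1}`. -/
def capped (n : ℕ) (d : Fin n → ℝ) : Set (Fin n → ℝ) :=
  {x | (∀ i, 0 ≤ x i) ∧ (∀ i, x i ≤ d i) ∧ ∑ i, x i = 1}

/-- Transition matrix `M(Q) = ∑ₖ Gₖ ⊙ (1 (Q eₖ)ᵀ)`, entrywise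
`M(Q)[i,j] = ∑ₐ Q[j,a] p(i|j,a)` where `prob i j a = p(i|j,a)`. -/
def Mof {n p : ℕ} (prob : Fin n → Fin n → Fin p → ℝ) (Q : Fin n → Fin p → ℝ) :
    Matrix (Fin n) (Fin n) ℝ :=
  Matrix.of fun i j => ∑ a, Q j a * prob i j a

/-- Expected reward vector `r(Q) = (R ⊙ Q)1`. -/
def rvec {n p : ℕ} (R : Fin n → Fin p → ℝ) (Q : Fin n → Fin p → ℝ) : Fin n → ℝ :=
  fun s => ∑ a, Q s a * R s a

lemma key {n : ℕ} (hn : 0 < n) (d : Fin n → ℝ) (hd : ∀ i, 0 ≤ d i)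
    (hds : 1 ≤ ∑ i, d i) (m : Fin n → ℝ) :
    ∃ (t : ℝ) (x : Fin n → ℝ), x ∈ capped n d ∧
      (∑ j, max (m j - t) 0 * d j) + t = ∑ j, m j * x j := by
  classical
  set σ : Equiv.Perm (Fin n) := Tuple.sort (fun i => -m i) with hσ
  have hanti : ∀ i j : Fin n, i ≤ j → m (σ j) ≤ m (σ i) := by
    intro i j hij
    have := Tuple.monotone_sort (fun i => -m i) hij
    simpa [hσ] using this
  set c : ℕ → ℝ := fun k => ∑ i ∈ Finset.univ.filter (fun i : Fin n => (i : ℕ) < k), d (σ i)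
    with hc
  have hcn : c n = ∑ i, d i := by
    have : Finset.univ.filter (fun i : Fin n => (i : ℕ) < n) = Finset.univ := by
      apply Finset.filter_true_of_mem; intro i _; exact i.isLt
    rw [hc]; simp only [this]
    exact Equiv.sum_comp σ d
  have hcsucc : ∀ k : ℕ, ∀ hk : k < n, c (k + 1) = c k + d (σ ⟨k, hk⟩) := by
    intro k hk
    have hset : Finset.univ.filter (fun i : Fin n => (i : ℕ) < k + 1)
        = insert (⟨k, hk⟩ : Fin n) (Finset.univ.filter (fun i : Fin n => (i : ℕ) < k)) := by
      ext i
      simp only [Finset.mem_filter, Finset.mem_insert, Finset.mem_univ, true_and]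
      constructor
      · intro h
        rcases Nat.lt_succ_iff_lt_or_eq.mp h with h | h
        · exact Or.inr h
        · exact Or.inl (Fin.ext h)
      · rintro (rfl | h)
        · exact Nat.lt_succ_self k
        · exact Nat.lt_succ_of_lt h
    rw [hc]; simp only [hset]
    rw [Finset.sum_insert (by simp)]
    ring
  have hP : ∃ k, 1 ≤ c (k + 1) := by
    refine ⟨n - 1, ?_⟩
    have he : n - 1 + 1 = n := by omega
    rw [he, hcn]; exact hds
  set k₀ := Nat.find hP with hk₀def
  have hk₀ : 1 ≤ c (k₀ + 1) := Nat.find_spec hP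
  have hk₀min : ∀ j < k₀, c (j + 1) < 1 := fun j hj => by
    have := Nat.find_min hP hj; linarith [lt_of_not_ge this]
  have hk₀lt : k₀ < n := by
    have : k₀ ≤ n - 1 := Nat.find_le (by
      have he : n - 1 + 1 = n := by omega
      rw [he, hcn]; exact hds)
    omega
  set K : Fin n := ⟨k₀, hk₀lt⟩ with hK
  have hck₀ : c k₀ < 1 := by
    rcases Nat.eq_zero_or_pos k₀ with h0 | h0
    · rw [h0]; simp [hc]
    · have := hk₀min (k₀ - 1) (by omega)
      have he : k₀ - 1 + 1 = k₀ := by omega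
      rwa [he] at this
  have hcK : c (k₀ + 1) = c k₀ + d (σ K) := hcsucc k₀ hk₀lt
  set t : ℝ := m (σ K) with ht
  set x : Fin n → ℝ := fun j =>
    if ((σ.symm j : Fin n) : ℕ) < k₀ then d j
    else if ((σ.symm j : Fin n) : ℕ) = k₀ then 1 - c k₀ else 0 with hx
  have hxσ : ∀ i : Fin n, x (σ i) =
      if (i : ℕ) < k₀ then d (σ i) else if (i : ℕ) = k₀ then 1 - c k₀ else 0 := by
    intro i; rw [hx]; simp
  have hxmem : x ∈ capped n d := by
    refine ⟨?_, ?_, ?_⟩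
    · intro j; rw [hx]
      dsimp only
      split
      · exact hd j
      · split
        · linarith
        · exact le_rfl
    · intro j; rw [hx]
      dsimp only
      split
      · exact le_rfl
      · split
        · next h1 h2 =>
            have hjK : j = σ K := by
              have : σ.symm j = K := Fin.ext h2
              rw [← this]; simp
            rw [hjK]; linarith [hcK, hk₀]
        · exact hd j
    · rw [← Equiv.sum_comp σ x]
      have : ∀ i : Fin n, x (σ i) =
          (if (i : ℕ) < k₀ then d (σ i) else 0) + (if i = K then 1 - c k₀ else 0) := by
        intro i
        rw [hxσ i]
        rcases lt_trichotomy (i : ℕ) k₀ with h | h | h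
        · simp [h, show i ≠ K from fun he => by simp [he, hK] at h]
        · have : i = K := Fin.ext h
          simp [this, hK, h]
        · simp [Nat.lt_asymm h, Nat.ne_of_gt h, show i ≠ K from fun he => by
            subst he; simp [hK] at h]
      rw [Finset.sum_congr rfl (fun i _ => this i), Finset.sum_add_distrib,
        Finset.sum_ite_eq' Finset.univ K (fun _ => 1 - c k₀)]
      simp only [Finset.mem_univ, if_true]
      rw [← Finset.sum_filter]
      show c k₀ + (1 - c k₀) = 1
      ring
  refine ⟨t, x, hxmem, ?_⟩
  rw [← Equiv.sum_comp σ (fun j => max (m j - t) 0 * d j),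
      ← Equiv.sum_comp σ (fun j => m j * x j)]
  have hmax : ∀ i : Fin n, max (m (σ i) - t) 0 * d (σ i) =
      if (i : ℕ) < k₀ then (m (σ i) - t) * d (σ i) else 0 := by
    intro i
    split
    · next h =>
        have : t ≤ m (σ i) := hanti i K (by
          rw [Fin.le_def, hK]
          simp only [Fin.val_mk]
          omega)
        rw [max_eq_left (by linarith)]
    · next h =>
        have : m (σ i) ≤ t := hanti K i (by
          rw [Fin.le_def, hK]
          simp only [Fin.val_mk]
          omega)
        rw [max_eq_right (by linarith), zero_mul]
  have hrhs : ∀ i : Fin n, m (σ i) * x (σ i) =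
      (if (i : ℕ) < k₀ then m (σ i) * d (σ i) else 0) +
      (if i = K then t * (1 - c k₀) else 0) := by
    intro i
    rw [hxσ i]
    rcases lt_trichotomy (i : ℕ) k₀ with h | h | h
    · simp [h, show i ≠ K from fun he => by simp [he, hK] at h]
    · have hiK : i = K := Fin.ext h
      subst hiK; simp [hK, ht]
    · simp [Nat.lt_asymm h, Nat.ne_of_gt h, show i ≠ K from fun he => by
        subst he; simp [hK] at h]
  rw [Finset.sum_congr rfl (fun i _ => hmax i), Finset.sum_congr rfl (fun i _ => hrhs i),
    Finset.sum_add_distrib, Finset.sum_ite_eq' Finset.univ K (fun _ => t * (1 - c k₀))]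
  simp only [Finset.mem_univ, if_true]
  have hcval : c k₀ = ∑ i : Fin n, (if (i : ℕ) < k₀ then d (σ i) else 0) := by
    simp only [hc]
    exact Finset.sum_filter _ _
  have h1 : ∑ i : Fin n, (if (i : ℕ) < k₀ then (m (σ i) - t) * d (σ i) else 0)
      = ∑ i : Fin n, (if (i : ℕ) < k₀ then m (σ i) * d (σ i) else 0)
        - t * c k₀ := by
    rw [hcval, Finset.mul_sum, ← Finset.sum_sub_distrib]
    congr 1; ext i
    split <;> ring
  rw [h1]; ring

lemma weakmax {n : ℕ} (d : Fin n → ℝ) (m : Fin n → ℝ) (t : ℝ)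
    (x' : Fin n → ℝ) (hx' : x' ∈ capped n d) :
    ∑ j, m j * x' j ≤ (∑ j, max (m j - t) 0 * d j) + t := by
  obtain ⟨h0, hle, hsum⟩ := hx'
  have step1 : ∀ j, m j * x' j ≤ max (m j - t) 0 * x' j + t * x' j := by
    intro j
    have h1 : m j - t ≤ max (m j - t) 0 := le_max_left _ _
    have := mul_le_mul_of_nonneg_right h1 (h0 j)
    nlinarith
  calc ∑ j, m j * x' j ≤ ∑ j, (max (m j - t) 0 * x' j + t * x' j) :=
        Finset.sum_le_sum (fun j _ => step1 j)
    _ = (∑ j, max (m j - t) 0 * x' j) + t * ∑ j, x' j := by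
        rw [Finset.sum_add_distrib, Finset.mul_sum]
    _ ≤ (∑ j, max (m j - t) 0 * d j) + t := by
        rw [hsum, mul_one]
        refine add_le_add ?_ le_rfl
        exact Finset.sum_le_sum fun j _ =>
          mul_le_mul_of_nonneg_left (hle j) (le_max_right _ _)

lemma rowStoch_le_one {n p : ℕ} {Q : Fin n → Fin p → ℝ} (hQ : rowStoch Q)
    (s : Fin n) (a : Fin p) : Q s a ≤ 1 := by
  calc Q s a ≤ ∑ a', Q s a' := Finset.single_le_sum (fun a' _ => hQ.1 s a') (Finset.mem_univ a)
    _ = 1 := hQ.2 s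

lemma Mof_nonneg {n p : ℕ} {prob : Fin n → Fin n → Fin p → ℝ}
    (hG : ∀ k : Fin p, colStoch (Matrix.of fun i j => prob i j k))
    {Q : Fin n → Fin p → ℝ} (hQ : rowStoch Q) (i j : Fin n) :
    0 ≤ Mof prob Q i j :=
  show (0:ℝ) ≤ ∑ a, Q j a * prob i j a from
    Finset.sum_nonneg fun a _ => mul_nonneg (hQ.1 j a) ((hG a).1 i j)

lemma Mof_le_one {n p : ℕ} {prob : Fin n → Fin n → Fin p → ℝ}
    (hG : ∀ k : Fin p, colStoch (Matrix.of fun i j => prob i j k))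
    {Q : Fin n → Fin p → ℝ} (hQ : rowStoch Q) (i j : Fin n) :
    Mof prob Q i j ≤ 1 := by
  have hp1 : ∀ a, prob i j a ≤ 1 := by
    intro a
    calc prob i j a ≤ ∑ i', prob i' j a :=
          Finset.single_le_sum (fun i' _ => (hG a).1 i' j) (Finset.mem_univ i)
      _ = 1 := (hG a).2 j
  calc Mof prob Q i j = ∑ a, Q j a * prob i j a := rfl
    _ ≤ ∑ a, Q j a * 1 := Finset.sum_le_sum (fun a _ =>
        mul_le_mul_of_nonneg_left (hp1 a) (hQ.1 j a))
    _ = 1 := by simp [hQ.2 j]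

lemma cbound {n p : ℕ} {prob : Fin n → Fin n → Fin p → ℝ}
    (hG : ∀ k : Fin p, colStoch (Matrix.of fun i j => prob i j k))
    (R : Fin n → Fin p → ℝ) (Uhat : Fin n → ℝ)
    {Q : Fin n → Fin p → ℝ} (hQ : rowStoch Q) (j : Fin n) :
    |(rvec R Q + (Mof prob Q)ᵀ.mulVec Uhat) j| ≤
      (∑ j', ∑ a, |R j' a|) + ∑ i, |Uhat i| := by
  have h1 : |rvec R Q j| ≤ ∑ j', ∑ a, |R j' a| := by
    calc |rvec R Q j| ≤ ∑ a, |Q j a * R j a| := Finset.abs_sum_le_sum_abs _ _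
      _ ≤ ∑ a, |R j a| := Finset.sum_le_sum (fun a _ => by
          rw [abs_mul, abs_of_nonneg (hQ.1 j a)]
          exact mul_le_of_le_one_left (abs_nonneg _) (rowStoch_le_one hQ j a))
      _ ≤ ∑ j', ∑ a, |R j' a| := Finset.single_le_sum
          (f := fun j' => ∑ a, |R j' a|)
          (fun j' _ => Finset.sum_nonneg fun a _ => abs_nonneg _) (Finset.mem_univ j)
  have h2 : |(Mof prob Q)ᵀ.mulVec Uhat j| ≤ ∑ i, |Uhat i| := by
    have he : (Mof prob Q)ᵀ.mulVec Uhat j = ∑ i, Mof prob Q i j * Uhat i := by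
      rw [Matrix.mulVec, dotProduct]
      simp [Matrix.transpose_apply]
    rw [he]
    calc |∑ i, Mof prob Q i j * Uhat i| ≤ ∑ i, |Mof prob Q i j * Uhat i| :=
          Finset.abs_sum_le_sum_abs _ _
      _ ≤ ∑ i, |Uhat i| := Finset.sum_le_sum (fun i _ => by
          rw [abs_mul, abs_of_nonneg (Mof_nonneg hG hQ i j)]
          exact mul_le_of_le_one_left (abs_nonneg _) (Mof_le_one hG hQ i j))
  calc |(rvec R Q + (Mof prob Q)ᵀ.mulVec Uhat) j|
      = |rvec R Q j + (Mof prob Q)ᵀ.mulVec Uhat j| := by rw [Pi.add_apply]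
    _ ≤ |rvec R Q j| + |(Mof prob Q)ᵀ.mulVec Uhat j| := abs_add_le _ _
    _ ≤ _ := add_le_add h1 h2

lemma weakmin {n : ℕ} (d : Fin n → ℝ) (c y : Fin n → ℝ) (z : ℝ)
    (hy : ∀ i, 0 ≤ y i) (hfeas : ∀ i, -y i + z ≤ c i)
    (x : Fin n → ℝ) (hx : x ∈ capped n d) :
    -(d ⬝ᵥ y) + z ≤ x ⬝ᵥ c := by
  obtain ⟨h0, hle, hsum⟩ := hx
  have e1 : ∑ j, x j * (-(y j) + z) = -(∑ j, x j * y j) + z := by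
    have h : ∀ j ∈ Finset.univ, x j * (-(y j) + z) = -(x j * y j) + z * x j :=
      fun j _ => by ring
    rw [Finset.sum_congr rfl h, Finset.sum_add_distrib, ← Finset.mul_sum, hsum,
      mul_one, Finset.sum_neg_distrib]
  have e2 : ∑ j, x j * y j ≤ d ⬝ᵥ y := by
    rw [dotProduct]
    exact Finset.sum_le_sum fun j _ => mul_le_mul_of_nonneg_right (hle j) (hy j)
  have e3 : ∑ j, x j * (-(y j) + z) ≤ x ⬝ᵥ c := by
    rw [dotProduct]
    exact Finset.sum_le_sum fun j _ => mul_le_mul_of_nonneg_left (hfeas j) (h0 j)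
  linarith

lemma dot_bounds {n : ℕ} {d : Fin n → ℝ} {x c : Fin n → ℝ} (hx : x ∈ capped n d)
    {C : ℝ} (hc : ∀ j, |c j| ≤ C) : -C ≤ x ⬝ᵥ c ∧ x ⬝ᵥ c ≤ C := by
  obtain ⟨h0, _, hsum⟩ := hx
  rw [dotProduct]
  constructor
  · calc -C = ∑ j, x j * (-C) := by rw [← Finset.sum_mul, hsum, one_mul]
      _ ≤ ∑ j, x j * c j := Finset.sum_le_sum fun j _ =>
          mul_le_mul_of_nonneg_left (neg_le_of_abs_le (hc j)) (h0 j)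
  · calc ∑ j, x j * c j ≤ ∑ j, x j * C := Finset.sum_le_sum fun j _ =>
          mul_le_mul_of_nonneg_left (le_of_abs_le (hc j)) (h0 j)
      _ = C := by rw [← Finset.sum_mul, hsum, one_mul]

lemma sSup_eq_of {A B : Set ℝ} (hne : A.Nonempty) (hAB : A ⊆ B)
    (hbdd : BddAbove A) (hB : ∀ v ∈ B, ∃ w ∈ A, v ≤ w) : sSup A = sSup B := by
  have hBbdd : BddAbove B := by
    obtain ⟨b, hb⟩ := hbdd
    exact ⟨b, fun v hv => by obtain ⟨w, hw, hvw⟩ := hB v hv; exact hvw.trans (hb hw)⟩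
  refine le_antisymm (csSup_le_csSup hBbdd hne hAB) ?_
  refine csSup_le (hne.mono hAB) ?_
  intro v hv
  obtain ⟨w, hw, hvw⟩ := hB v hv
  exact hvw.trans (le_csSup hbdd hw)

/-- max-min as an LP: `max_{Q∈C} min_{x∈X} xᵀ(r(Q) + M(Q)ᵀÛ)`
has the same optimal value as the LP maximizing `-dᵀy + z` subject to
`M = ∑ₖ Gₖ ⊙ (1(Qeₖ)ᵀ)`, `r = (R ⊙ Q)1`, `-y + z·1 ≤ r + MᵀÛ`,
`K = M + S + s·1ᵀ`, `s + d ≥ Kd`, `Q1 = 1`, `Q, y, S, K ≥ 0`. -/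
theorem stmt14 {n p : ℕ} (d : Fin n → ℝ)
    (hd : ∀ i, 0 ≤ d i) (hds : 1 ≤ ∑ i, d i)
    (prob : Fin n → Fin n → Fin p → ℝ)
    (hG : ∀ k : Fin p, colStoch (Matrix.of fun i j => prob i j k))
    (R : Fin n → Fin p → ℝ) (Uhat : Fin n → ℝ)
    (hCne : ∃ Q : Fin n → Fin p → ℝ, rowStoch Q ∧
      ∀ x ∈ capped n d, ∀ i, (Mof prob Q).mulVec x i ≤ d i) :
    sSup {v : ℝ | ∃ Q : Fin n → Fin p → ℝ,
        (rowStoch Q ∧ ∀ x ∈ capped n d, ∀ i, (Mof prob Q).mulVec x i ≤ d i) ∧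
        v = sInf {w : ℝ | ∃ x ∈ capped n d,
          w = x ⬝ᵥ (rvec R Q + (Mof prob Q)ᵀ.mulVec Uhat)}}
      = sSup {v : ℝ | ∃ (Q : Fin n → Fin p → ℝ) (y : Fin n → ℝ) (z : ℝ)
          (S K : Matrix (Fin n) (Fin n) ℝ) (s : Fin n → ℝ),
        rowStoch Q ∧
        (∀ i, 0 ≤ y i) ∧
        (∀ i j, 0 ≤ S i j) ∧ (∀ i j, 0 ≤ K i j) ∧
        K = Mof prob Q + S + Matrix.of (fun i (_ : Fin n) => s i) ∧
        (∀ i, K.mulVec d i ≤ s i + d i) ∧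
        (∀ i, -y i + z ≤ (rvec R Q + (Mof prob Q)ᵀ.mulVec Uhat) i) ∧
        v = -(d ⬝ᵥ y) + z} := by
  classical
  have hn : 0 < n := by
    rcases Nat.eq_zero_or_pos n with h | h
    · exfalso; subst h; simp at hds; linarith
    · exact h
  obtain ⟨t₀, x₀, hx₀, -⟩ := key hn d hd hds (fun _ => 0)
  apply sSup_eq_of
  · -- A nonempty
    obtain ⟨Q, hQ⟩ := hCne
    exact ⟨_, Q, hQ, rfl⟩
  · -- A ⊆ B : strong duality
    rintro v ⟨Q, ⟨hQs, hQf⟩, rfl⟩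
    set c : Fin n → ℝ := rvec R Q + (Mof prob Q)ᵀ.mulVec Uhat with hcdef
    obtain ⟨t, x, hx, heq⟩ := key hn d hd hds (fun j => -(c j))
    set z : ℝ := -t with hz
    set y : Fin n → ℝ := fun j => max (-(c j) - t) 0 with hy
    have hy0 : ∀ i, 0 ≤ y i := fun i => le_max_right _ _
    have hyfeas : ∀ i, -y i + z ≤ c i := by
      intro i
      have h1 : -(c i) - t ≤ y i := le_max_left _ _
      rw [hz]; linarith
    have hneg : ∑ j, -(c j) * x j = -(∑ j, x j * c j) := by
      rw [← Finset.sum_neg_distrib]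
      exact Finset.sum_congr rfl fun j _ => by ring
    have hdy : d ⬝ᵥ y = ∑ j, y j * d j := by
      rw [dotProduct]; exact Finset.sum_congr rfl fun j _ => mul_comm _ _
    have hxc : x ⬝ᵥ c = ∑ j, x j * c j := by rw [dotProduct]
    have hval : -(d ⬝ᵥ y) + z = x ⬝ᵥ c := by
      have heq' : (∑ j, y j * d j) + t = -(∑ j, x j * c j) := by
        rw [← hneg, ← heq]
      rw [hdy, hxc, hz]; linarith
    have hinf : sInf {w : ℝ | ∃ x' ∈ capped n d, w = x' ⬝ᵥ c} = x ⬝ᵥ c := by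
      refine le_antisymm (csInf_le ⟨-(d ⬝ᵥ y) + z, ?_⟩ ⟨x, hx, rfl⟩)
        (le_csInf ⟨_, x, hx, rfl⟩ ?_)
      · rintro w ⟨x', hx', rfl⟩
        exact weakmin d c y z hy0 hyfeas x' hx'
      · rintro w ⟨x', hx', rfl⟩
        rw [← hval]
        exact weakmin d c y z hy0 hyfeas x' hx'
    choose tt xx hxx hteq using fun i => key hn d hd hds (fun j => Mof prob Q i j)
    refine ⟨Q, y, z,
      Matrix.of (fun i j => max (Mof prob Q i j - tt i) 0 - Mof prob Q i j - (-(tt i))),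
      Matrix.of (fun i j => max (Mof prob Q i j - tt i) 0),
      (fun i => -(tt i)), hQs, hy0, ?_, ?_, ?_, ?_, hyfeas, ?_⟩
    · intro i j
      simp only [Matrix.of_apply]
      have := le_max_left (Mof prob Q i j - tt i) 0
      linarith
    · intro i j
      simp only [Matrix.of_apply]
      exact le_max_right _ _
    · ext i j
      simp only [Matrix.of_apply, Matrix.add_apply]
      ring
    · intro i
      have hKd : (Matrix.of (fun i j => max (Mof prob Q i j - tt i) 0)).mulVec d i
          = ∑ j, max (Mof prob Q i j - tt i) 0 * d j := by
        rw [Matrix.mulVec, dotProduct]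
        simp only [Matrix.of_apply]
      have hmv : (Mof prob Q).mulVec (xx i) i = ∑ j, Mof prob Q i j * xx i j := by
        rw [Matrix.mulVec, dotProduct]
      have h1 := hteq i
      have h2 := hQf (xx i) (hxx i) i
      rw [hmv] at h2
      rw [hKd]
      show ∑ j, max (Mof prob Q i j - tt i) 0 * d j ≤ -tt i + d i
      linarith
    · exact hinf.trans hval.symm
  · -- BddAbove A
    refine ⟨(∑ j', ∑ a, |R j' a|) + ∑ i, |Uhat i|, ?_⟩
    rintro v ⟨Q, ⟨hQs, hQf⟩, rfl⟩
    have hcb := fun j => cbound hG R Uhat hQs j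
    have hle := csInf_le (s := {w : ℝ | ∃ x ∈ capped n d,
        w = x ⬝ᵥ (rvec R Q + (Mof prob Q)ᵀ.mulVec Uhat)})
      ⟨-((∑ j', ∑ a, |R j' a|) + ∑ i, |Uhat i|), by
        rintro w ⟨x', hx', rfl⟩
        exact (dot_bounds hx' hcb).1⟩ ⟨x₀, hx₀, rfl⟩
    exact hle.trans (dot_bounds hx₀ hcb).2
  · -- B dominated by A : weak duality
    rintro v ⟨Q, y, z, S, K, s, hQs, hy, hS, hK, hKeq, hKd, hfeas, rfl⟩
    have hQf : ∀ x ∈ capped n d, ∀ i, (Mof prob Q).mulVec x i ≤ d i := by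
      intro x hx i
      obtain ⟨h0, hle, hsum⟩ := hx
      have hM : ∀ j, Mof prob Q i j = K i j - S i j - s i := by
        intro j
        rw [hKeq]
        simp only [Matrix.add_apply, Matrix.of_apply]
        ring
      have e : (Mof prob Q).mulVec x i
          = (∑ j, K i j * x j) - (∑ j, S i j * x j) - s i := by
        rw [Matrix.mulVec, dotProduct, Finset.sum_congr rfl (fun j _ => by rw [hM j])]
        have h : ∀ j ∈ Finset.univ, (K i j - S i j - s i) * x j
            = K i j * x j - S i j * x j - s i * x j := fun j _ => by ring
        rw [Finset.sum_congr rfl h, Finset.sum_sub_distrib, Finset.sum_sub_distrib,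
          ← Finset.mul_sum, hsum, mul_one]
      have h1 : ∑ j, K i j * x j ≤ s i + d i := by
        refine le_trans (Finset.sum_le_sum fun j _ =>
          mul_le_mul_of_nonneg_left (hle j) (hK i j)) ?_
        have := hKd i
        rwa [Matrix.mulVec, dotProduct] at this
      have h2 : 0 ≤ ∑ j, S i j * x j :=
        Finset.sum_nonneg fun j _ => mul_nonneg (hS i j) (h0 j)
      rw [e]; linarith
    refine ⟨sInf {w : ℝ | ∃ x ∈ capped n d,
        w = x ⬝ᵥ (rvec R Q + (Mof prob Q)ᵀ.mulVec Uhat)}, ⟨Q, ⟨hQs, hQf⟩, rfl⟩, ?_⟩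
    refine le_csInf ⟨_, x₀, hx₀, rfl⟩ ?_
    rintro w ⟨x', hx', rfl⟩
    exact weakmin d _ y z hy hfeas x' hx'
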